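/- If n is a positive integer with n ≡ 0 or 4 (mod 5), then there is no quaternary Hermitian LCD [n, 2, ⌊4n/5⌋] code. -/

import Mathlib

open scoped Classical

noncomputable section

/-- The finite field with four elements. -/
abbrev F4 := GaloisField 2 2

/-- The (Hamming) weight of a vector over `F4`: the number of nonzero coordinates. -/
def wt {n : ℕ} (x : Fin n → F4) : ℕ :=
  (Finset.univ.filter (fun i => x i ≠ 0)).card

/-- Hermitian inner product on `F4^n`: `∑ i, x i * (conj (y i))` with `conj z = z^2`. -/
def hermInner {n : ℕ} (x y : Fin n → F4) : F4 :=
  ∑ i, x i * (y i) ^ 2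

/-- Membership in the Hermitian dual `C^{⊥H}` of a code `C`. -/
def inHermDual {n : ℕ} (C : Submodule F4 (Fin n → F4)) (x : Fin n → F4) : Prop :=
  ∀ y ∈ C, hermInner x y = 0

/-- `C` is Hermitian LCD: `C ∩ C^{⊥H} = {0}`. -/
def IsHermLCD {n : ℕ} (C : Submodule F4 (Fin n → F4)) : Prop :=
  ∀ x ∈ C, inHermDual C x → x = 0

/-- `C` has minimum weight (exactly) `d`. -/
def minWtIs {n : ℕ} (C : Submodule F4 (Fin n → F4)) (d : ℕ) : Prop :=
  (∃ x ∈ C, x ≠ 0 ∧ wt x = d) ∧ ∀ x ∈ C, x ≠ 0 → d ≤ wt x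

/-- `C` is a quaternary Hermitian LCD `[n,k,d]` code. -/
def IsHermLCDCode (n k d : ℕ) (C : Submodule F4 (Fin n → F4)) : Prop :=
  Module.finrank F4 C = k ∧ IsHermLCD C ∧ minWtIs C d

/-- `d₄(n,k) = d`: the largest minimum weight among quaternary Hermitian LCD `[n,k]` codes
is `d`. -/
def d4Is (n k d : ℕ) : Prop :=
  (∃ C : Submodule F4 (Fin n → F4), IsHermLCDCode n k d C) ∧
  (∀ C : Submodule F4 (Fin n → F4), Module.finrank F4 C = k → IsHermLCD C →
    ∃ x ∈ C, x ≠ 0 ∧ wt x ≤ d)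


namespace Aux

noncomputable instance : Fintype F4 := Fintype.ofFinite F4

lemma card4 : Fintype.card F4 = 4 := by simpa using GaloisField.card 2 2 (by norm_num)

lemma h2 : (2:F4) = 0 := by exact_mod_cast (CharP.cast_eq_zero F4 2)

lemma cube {x : F4} (hx : x ≠ 0) : x ^ 3 = 1 := by
  have h := FiniteField.pow_card_sub_one_eq_one x hx
  rw [card4] at h; simpa using h

lemma pow4 (x : F4) : x ^ 4 = x := by
  have h := FiniteField.pow_card x
  rwa [card4] at h

lemma sq_add (a b : F4) : (a+b)^2 = a^2+b^2 := by
  linear_combination (a*b) * h2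

lemma exists_omega : ∃ w : F4, w ≠ 0 ∧ w ≠ 1 ∧ w^2 = w + 1 ∧ w^3 = 1 ∧
    (∀ x : F4, x = 0 ∨ x = 1 ∨ x = w ∨ x = w^2) := by
  have hne : (({0,1} : Finset F4)ᶜ).Nonempty := by
    rw [← Finset.card_pos, Finset.card_compl, card4]
    have h1 : ({0,1}:Finset F4).card ≤ 2 := (Finset.card_insert_le _ _).trans (by simp)
    omega
  obtain ⟨w, hw⟩ := hne
  simp only [Finset.mem_compl, Finset.mem_insert, Finset.mem_singleton, not_or] at hw
  obtain ⟨hw0, hw1⟩ := hw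
  have hcube : w ^ 3 = 1 := cube hw0
  have hrel : w^2 + w + 1 = 0 := by
    have hfac : (w + 1) * (w^2 + w + 1) = 0 := by
      linear_combination hcube + (w^2 + w + 1) * h2
    rcases mul_eq_zero.mp hfac with h | h
    · exact absurd (by linear_combination h - h2) hw1
    · exact h
  have hrel' : w^2 = w + 1 := by linear_combination hrel - (w+1)*h2
  refine ⟨w, hw0, hw1, hrel', hcube, ?_⟩
  have hsq0 : w^2 ≠ 0 := pow_ne_zero _ hw0
  have hsq1 : w^2 ≠ 1 := by
    intro h
    apply hw1
    have hz : (w+1)^2 = 0 := by linear_combination (sq_add w 1) + h + h2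
    have := pow_eq_zero_iff (n := 2) (by norm_num) |>.mp hz
    linear_combination this - h2
  have hsqw : w^2 ≠ w := by
    intro h
    have : w * (w - 1) = 0 := by linear_combination h
    rcases mul_eq_zero.mp this with h' | h'
    · exact hw0 h'
    · exact hw1 (by linear_combination h')
  have hcard : ({0, 1, w, w^2} : Finset F4).card = 4 := by
    rw [Finset.card_insert_of_notMem (by
          simp only [Finset.mem_insert, Finset.mem_singleton]
          push_neg
          exact ⟨zero_ne_one, Ne.symm hw0, Ne.symm hsq0⟩),
        Finset.card_insert_of_notMem (by
          simp only [Finset.mem_insert, Finset.mem_singleton]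
          push_neg
          exact ⟨Ne.symm hw1, Ne.symm hsq1⟩),
        Finset.card_insert_of_notMem (by
          simp only [Finset.mem_singleton]
          exact fun h => hsqw h.symm)]
    simp
  have huniv : ({0, 1, w, w^2} : Finset F4) = Finset.univ :=
    Finset.eq_univ_of_card _ (by rw [hcard, card4])
  intro x
  have : x ∈ ({0, 1, w, w^2} : Finset F4) := huniv ▸ Finset.mem_univ x
  simpa using this

end Aux

namespace Aux

variable {n : ℕ}

lemma herm_add_left (x y z : Fin n → F4) :
    hermInner (x + y) z = hermInner x z + hermInner y z := by
  simp only [hermInner, Pi.add_apply, add_mul, Finset.sum_add_distrib]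

lemma herm_smul_left (c : F4) (x y : Fin n → F4) :
    hermInner (c • x) y = c * hermInner x y := by
  simp only [hermInner, Pi.smul_apply, smul_eq_mul, Finset.mul_sum, mul_assoc]

lemma herm_add_right (x y z : Fin n → F4) :
    hermInner x (y + z) = hermInner x y + hermInner x z := by
  simp only [hermInner, Pi.add_apply, ← Finset.sum_add_distrib]
  refine Finset.sum_congr rfl fun i _ => ?_
  rw [sq_add]; ring

lemma herm_smul_right (c : F4) (x y : Fin n → F4) :
    hermInner x (c • y) = c ^ 2 * hermInner x y := by
  simp only [hermInner, Pi.smul_apply, smul_eq_mul, Finset.mul_sum]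
  refine Finset.sum_congr rfl fun i _ => ?_
  ring

lemma herm_conj (x y : Fin n → F4) : hermInner y x = (hermInner x y) ^ 2 := by
  show (∑ i, y i * x i ^ 2) = (∑ i, x i * y i ^ 2) ^ 2
  rw [sum_pow_char]
  refine Finset.sum_congr rfl fun i _ => ?_
  have h : (x i * y i ^ 2) ^ 2 = x i ^ 2 * (y i)^4 := by ring
  rw [h, pow4]; ring

lemma herm_self (x : Fin n → F4) : hermInner x x = ((wt x : ℕ) : F4) := by
  rw [hermInner, wt]
  rw [← Finset.sum_filter_add_sum_filter_not Finset.univ (fun i => x i ≠ 0)]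
  have h1 : ∑ i ∈ Finset.univ.filter (fun i => x i ≠ 0), x i * x i ^ 2 =
      ∑ i ∈ Finset.univ.filter (fun i => x i ≠ 0), (1:F4) := by
    refine Finset.sum_congr rfl fun i hi => ?_
    simp only [Finset.mem_filter] at hi
    have : x i * x i ^ 2 = x i ^ 3 := by ring
    rw [this, cube hi.2]
  have h2' : ∑ i ∈ Finset.univ.filter (fun i => ¬ x i ≠ 0), x i * x i ^ 2 = 0 := by
    refine Finset.sum_eq_zero fun i hi => ?_
    simp only [Finset.mem_filter, not_not] at hi
    rw [hi.2]; ring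
  rw [h1, h2', Finset.sum_const, add_zero, nsmul_eq_mul, mul_one]

lemma cast_even {m : ℕ} (hm : m % 2 = 0) : ((m : ℕ) : F4) = 0 := by
  obtain ⟨k, rfl⟩ : ∃ k, m = 2 * k := ⟨m / 2, by omega⟩
  push_cast
  rw [h2]; ring

lemma cast_odd {m : ℕ} (hm : m % 2 = 1) : ((m : ℕ) : F4) = 1 := by
  obtain ⟨k, rfl⟩ : ∃ k, m = 2 * k + 1 := ⟨m / 2, by omega⟩
  push_cast
  rw [h2]; ring

lemma wt_smul {c : F4} (hc : c ≠ 0) (x : Fin n → F4) : wt (c • x) = wt x := by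
  unfold wt
  congr 1
  refine Finset.filter_congr fun i _ => ?_
  simp [hc]

/-- expansion of the quadratic form -/
lemma herm_expand (x y : Fin n → F4) (c : F4) :
    hermInner (x + c • y) (x + c • y) =
      hermInner x x + c^3 * hermInner y y + c^2 * hermInner x y + c * (hermInner x y)^2 := by
  rw [herm_add_left, herm_add_right, herm_add_right, herm_smul_left, herm_smul_right,
    herm_smul_right, herm_smul_left, herm_conj x y]
  ring

/-- Core algebraic lemma: isotropic u0 with constant q on lines implies orthogonality. -/
lemma core (u0 v0 : Fin n → F4) (w : F4) (hrel : w^2 = w + 1) (hw3 : w^3 = 1)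
    (hq0 : hermInner u0 u0 = 0)
    (hone : hermInner (u0 + v0) (u0 + v0) = hermInner v0 v0)
    (hww : hermInner (u0 + w • v0) (u0 + w • v0) = hermInner v0 v0) :
    hermInner u0 v0 = 0 := by
  set B := hermInner u0 v0 with hB
  have e1 : B + B^2 = 0 := by
    have := herm_expand u0 v0 1
    simp only [one_smul, one_pow, one_mul] at this
    rw [hone, hq0] at this
    linear_combination - this
  have e2 : w^2 * B + w * B^2 = 0 := by
    have := herm_expand u0 v0 w
    rw [hww, hq0, hw3] at this
    linear_combination - this
  have hBsq : B^2 = B := by linear_combination e1 - B * h2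
  rw [hBsq] at e2
  have : (w^2 + w) * B = 0 := by linear_combination e2
  have hsum : w^2 + w = 1 := by linear_combination hrel + w * h2
  rw [hsum, one_mul] at this
  exact this

end Aux

namespace Aux

variable {n : ℕ}

/-- Per-coordinate count: if `(c,d) ≠ (0,0)` then exactly 4 of the 5 values
`d, c, c+d, c+wd, c+w²d` are nonzero. -/
lemma pointwise (w c d : F4) (hw0 : w ≠ 0) (hrel : w^2 = w + 1)
    (hcov : ∀ x : F4, x = 0 ∨ x = 1 ∨ x = w ∨ x = w^2)
    (hcd : c ≠ 0 ∨ d ≠ 0) :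
    ((if d ≠ 0 then 1 else 0) + (if c ≠ 0 then 1 else 0) + (if c + d ≠ 0 then 1 else 0)
      + (if c + w*d ≠ 0 then 1 else 0) + (if c + w^2*d ≠ 0 then 1 else 0) : ℕ) = 4 := by
  by_cases hd : d = 0
  · subst hd
    have hc : c ≠ 0 := by tauto
    rw [if_neg (by simp), if_pos hc, if_pos (by simpa using hc),
        if_pos (by simpa using hc), if_pos (by simpa using hc)]
  · have hwsq : w^2 ≠ 0 := pow_ne_zero _ hw0
    have hc : c = (c * d⁻¹) * d := (inv_mul_cancel_right₀ hd c).symm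
    rcases hcov (c * d⁻¹) with h | h | h | h <;> rw [h] at hc
    · -- c = 0
      rw [zero_mul] at hc; subst hc
      rw [if_pos hd, if_neg (by simp), if_pos (by simpa using hd),
          if_pos (by simpa using mul_ne_zero hw0 hd),
          if_pos (by simpa using mul_ne_zero hwsq hd)]
    · -- c = d
      rw [one_mul] at hc; rw [hc]
      have k1 : ¬ (d + d ≠ 0) := by
        simp only [ne_eq, not_not]; linear_combination d * h2
      have k2 : d + w * d ≠ 0 := by
        have e : d + w*d = w^2 * d := by linear_combination (-d) * hrel
        rw [e]; exact mul_ne_zero hwsq hd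
      have k3 : d + w^2 * d ≠ 0 := by
        have e : d + w^2*d = w * d := by linear_combination d * hrel + d * h2
        rw [e]; exact mul_ne_zero hw0 hd
      rw [if_pos hd, if_neg k1, if_pos k2, if_pos k3]
    · -- c = w * d
      rw [hc]
      have k1 : w*d + d ≠ 0 := by
        have e : w*d + d = w^2 * d := by linear_combination (-d) * hrel
        rw [e]; exact mul_ne_zero hwsq hd
      have k2 : ¬ (w*d + w*d ≠ 0) := by
        simp only [ne_eq, not_not]; linear_combination (w*d) * h2
      have k3 : w*d + w^2*d ≠ 0 := by
        have e : w*d + w^2*d = d := by linear_combination d * hrel + (w*d) * h2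
        rw [e]; exact hd
      rw [if_pos hd, if_pos (mul_ne_zero hw0 hd), if_pos k1, if_neg k2, if_pos k3]
    · -- c = w^2 * d
      rw [hc]
      have k1 : w^2*d + d ≠ 0 := by
        have e : w^2*d + d = w * d := by linear_combination d * hrel + d * h2
        rw [e]; exact mul_ne_zero hw0 hd
      have k2 : w^2*d + w*d ≠ 0 := by
        have e : w^2*d + w*d = d := by linear_combination d * hrel + (w*d) * h2
        rw [e]; exact hd
      have k3 : ¬ (w^2*d + w^2*d ≠ 0) := by
        simp only [ne_eq, not_not]; linear_combination (w^2*d) * h2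
      rw [if_pos hd, if_pos (mul_ne_zero hwsq hd), if_pos k1, if_pos k2, if_neg k3]

/-- The sum of the weights of the five projective classes equals `4 ·` (number of
coordinates where `(u,v)` is not both zero). -/
lemma five_sum (u v : Fin n → F4) (w : F4) (hw0 : w ≠ 0) (hrel : w^2 = w + 1)
    (hcov : ∀ x : F4, x = 0 ∨ x = 1 ∨ x = w ∨ x = w^2) :
    wt v + wt u + wt (u + v) + wt (u + w • v) + wt (u + w^2 • v)
      = 4 * (Finset.univ.filter (fun i => u i ≠ 0 ∨ v i ≠ 0)).card := by
  unfold wt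
  rw [Finset.card_filter, Finset.card_filter, Finset.card_filter, Finset.card_filter,
    Finset.card_filter, Finset.card_filter, Finset.mul_sum,
    ← Finset.sum_add_distrib, ← Finset.sum_add_distrib, ← Finset.sum_add_distrib,
    ← Finset.sum_add_distrib]
  refine Finset.sum_congr rfl fun i _ => ?_
  simp only [Pi.add_apply, Pi.smul_apply, smul_eq_mul]
  by_cases hcd : u i ≠ 0 ∨ v i ≠ 0
  · rw [if_pos hcd, mul_one]
    exact pointwise w (u i) (v i) hw0 hrel hcov hcd
  · rw [if_neg hcd, mul_zero]
    push_neg at hcd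
    obtain ⟨hc, hd⟩ := hcd
    simp [hc, hd]

end Aux

end

open Aux

set_option maxHeartbeats 2000000 in
theorem stmt2 (n : ℕ) (hn : 1 ≤ n) (h : n % 5 = 0 ∨ n % 5 = 4) :
    ¬ ∃ C : Submodule F4 (Fin n → F4), IsHermLCDCode n 2 (4 * n / 5) C := by
  rintro ⟨C, hrk, hlcd, hmin⟩
  obtain ⟨w, hw0, hw1, hrel, hw3, hcov⟩ := Aux.exists_omega
  set d := 4 * n / 5 with hd
  -- basis
  let b : Module.Basis (Fin 2) F4 C := Module.finBasisOfFinrankEq F4 C hrk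
  set u : Fin n → F4 := ((b 0 : C) : Fin n → F4) with hu
  set v : Fin n → F4 := ((b 1 : C) : Fin n → F4) with hv
  have humem : u ∈ C := by rw [hu]; exact (b 0).2
  have hvmem : v ∈ C := by rw [hv]; exact (b 1).2
  -- independence
  have hind : ∀ a c : F4, a • u + c • v = 0 → a = 0 ∧ c = 0 := by
    intro a c hac
    have hli2 : LinearIndependent F4 (fun i : Fin 2 => ((b i : C) : Fin n → F4)) :=
      b.linearIndependent.map' C.subtype (Submodule.ker_subtype C)
    have := Fintype.linearIndependent_iff.mp hli2 ![a, c] (by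
      rw [Fin.sum_univ_two]
      simp only [Matrix.cons_val_zero, Matrix.cons_val_one, Matrix.head_cons]
      rw [← hu, ← hv]
      exact hac)
    exact ⟨this 0, this 1⟩
  -- decomposition
  have hdecomp : ∀ y ∈ C, ∃ a c : F4, y = a • u + c • v := by
    intro y hy
    refine ⟨b.repr ⟨y, hy⟩ 0, b.repr ⟨y, hy⟩ 1, ?_⟩
    have hs := b.sum_repr ⟨y, hy⟩
    rw [Fin.sum_univ_two] at hs
    have h2s := congrArg (Subtype.val) hs
    simp only [Submodule.coe_add, SetLike.val_smul] at h2s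
    rw [← hu, ← hv] at h2s
    exact h2s.symm
  -- the five class representatives, membership and nonzeroness
  have hmemtv : ∀ t : F4, u + t • v ∈ C :=
    fun t => C.add_mem humem (C.smul_mem t hvmem)
  have hnetv : ∀ t : F4, u + t • v ≠ 0 := by
    intro t h0
    have e : (1:F4) • u + t • v = 0 := by simpa using h0
    exact one_ne_zero (hind 1 t e).1
  have hnev : v ≠ 0 := by
    intro h0
    have e : (0:F4) • u + (1:F4) • v = 0 := by simpa using h0
    exact one_ne_zero (hind 0 1 e).2
  -- weights
  have hb0 : d ≤ wt v := hmin.2 v hvmem hnev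
  have hb1 : d ≤ wt u := by
    have := hmin.2 _ (hmemtv 0) (hnetv 0)
    simpa using this
  have hb2 : d ≤ wt (u + v) := by
    have := hmin.2 _ (hmemtv 1) (hnetv 1)
    simpa using this
  have hb3 : d ≤ wt (u + w • v) := hmin.2 _ (hmemtv w) (hnetv w)
  have hb4 : d ≤ wt (u + w^2 • v) := hmin.2 _ (hmemtv (w^2)) (hnetv (w^2))
  have hK : (Finset.univ.filter (fun i => u i ≠ 0 ∨ v i ≠ 0)).card ≤ n := by
    have := Finset.card_filter_le (Finset.univ : Finset (Fin n))
      (fun i => u i ≠ 0 ∨ v i ≠ 0)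
    simpa using this
  have hsum := Aux.five_sum u v w hw0 hrel hcov
  -- parity helpers
  have hqe : ∀ x : Fin n → F4, wt x % 2 = 0 → hermInner x x = 0 := by
    intro x hx; rw [herm_self]; exact cast_even hx
  have hqo : ∀ x : Fin n → F4, wt x % 2 = 1 → hermInner x x = 1 := by
    intro x hx; rw [herm_self]; exact cast_odd hx
  -- the final punch: an isotropic direction contradicts LCD
  have punch : ∀ u0 v0 : Fin n → F4, u0 ∈ C → u0 ≠ 0 →
      (∀ y ∈ C, ∃ a c : F4, y = a • u0 + c • v0) →
      hermInner u0 u0 = 0 →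
      hermInner (u0 + v0) (u0 + v0) = hermInner v0 v0 →
      hermInner (u0 + w • v0) (u0 + w • v0) = hermInner v0 v0 → False := by
    intro u0 v0 hu0 hne0 hdec hq0 hone hww
    have hB : hermInner u0 v0 = 0 := core u0 v0 w hrel hw3 hq0 hone hww
    have hdual : inHermDual C u0 := by
      intro y hy
      obtain ⟨a, c, rfl⟩ := hdec y hy
      rw [herm_add_right, herm_smul_right, herm_smul_right, hq0, hB]
      ring
    exact hne0 (hlcd u0 hu0 hdual)
  -- decomposition transfer for u0 = u + t·v, v0 = v
  have hdec_t : ∀ t : F4, ∀ y ∈ C, ∃ a c : F4, y = a • (u + t • v) + c • v := by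
    intro t y hy
    obtain ⟨a, c, rfl⟩ := hdecomp y hy
    refine ⟨a, a * t + c, ?_⟩
    funext i
    simp only [Pi.add_apply, Pi.smul_apply, smul_eq_mul]
    linear_combination (-(a * t * v i)) * h2
  rcases h with h5 | h5
  · -- n ≡ 0 (mod 5): all five weights are 4n/5, which is even
    have he0 : wt v % 2 = 0 := by omega
    have he1 : wt u % 2 = 0 := by omega
    have he2 : wt (u + v) % 2 = 0 := by omega
    have he3 : wt (u + w • v) % 2 = 0 := by omega
    refine punch u v humem (by simpa using hnetv 0) hdecomp
      (hqe u he1) ?_ ?_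
    · rw [hqe _ he2, hqe _ he0]
    · rw [hqe _ he3, hqe _ he0]
  · -- n ≡ 4 (mod 5): exactly one weight is even
    have hdodd : d % 2 = 1 := by omega
    have hcases : (wt v = d+1 ∧ wt u = d ∧ wt (u+v) = d ∧ wt (u+w•v) = d ∧ wt (u+w^2•v) = d)
        ∨ (wt v = d ∧ wt u = d+1 ∧ wt (u+v) = d ∧ wt (u+w•v) = d ∧ wt (u+w^2•v) = d)
        ∨ (wt v = d ∧ wt u = d ∧ wt (u+v) = d+1 ∧ wt (u+w•v) = d ∧ wt (u+w^2•v) = d)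
        ∨ (wt v = d ∧ wt u = d ∧ wt (u+v) = d ∧ wt (u+w•v) = d+1 ∧ wt (u+w^2•v) = d)
        ∨ (wt v = d ∧ wt u = d ∧ wt (u+v) = d ∧ wt (u+w•v) = d ∧ wt (u+w^2•v) = d+1) := by
      omega
    -- convenient vector identities
    have idvu : ∀ z : Fin n → F4, hermInner (w • z) (w • z) = hermInner z z := by
      intro z
      rw [herm_smul_left, herm_smul_right]
      linear_combination (hermInner z z) * hw3
    rcases hcases with ⟨e0, e1, e2, e3, e4⟩ | ⟨e0, e1, e2, e3, e4⟩ | ⟨e0, e1, e2, e3, e4⟩ |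
      ⟨e0, e1, e2, e3, e4⟩ | ⟨e0, e1, e2, e3, e4⟩
    · -- wt v even : u0 = v, v0 = u
      refine punch v u hvmem hnev ?_ (hqe v (by omega)) ?_ ?_
      · intro y hy
        obtain ⟨a, c, rfl⟩ := hdecomp y hy
        exact ⟨c, a, by rw [add_comm]⟩
      · have hvu : v + u = u + v := add_comm v u
        rw [hvu, hqo _ (by omega), hqo _ (by omega)]
      · have hvu : v + w • u = w • (u + w^2 • v) := by
          funext i
          simp only [Pi.add_apply, Pi.smul_apply, smul_eq_mul]
          linear_combination (-(v i)) * hw3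
        rw [hvu, idvu, hqo _ (by omega), hqo _ (by omega)]
    · -- wt u even : u0 = u, v0 = v
      refine punch u v humem (by simpa using hnetv 0) hdecomp (hqe u (by omega)) ?_ ?_
      · rw [hqo _ (by omega), hqo _ (by omega)]
      · rw [hqo _ (by omega), hqo _ (by omega)]
    · -- wt (u+v) even : u0 = u + v, v0 = v
      refine punch (u + v) v (by simpa using hmemtv 1) (by simpa using hnetv 1)
        (by simpa using hdec_t 1) (hqe _ (by omega)) ?_ ?_
      · have hid : (u + v) + v = u := by
          funext i
          simp only [Pi.add_apply]
          linear_combination (v i) * h2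
        rw [hid, hqo _ (by omega), hqo _ (by omega)]
      · have hid : (u + v) + w • v = u + w^2 • v := by
          funext i
          simp only [Pi.add_apply, Pi.smul_apply, smul_eq_mul]
          linear_combination (-(v i)) * hrel
        rw [hid, hqo _ (by omega), hqo _ (by omega)]
    · -- wt (u+w•v) even : u0 = u + w•v, v0 = v
      refine punch (u + w • v) v (hmemtv w) (hnetv w)
        (hdec_t w) (hqe _ (by omega)) ?_ ?_
      · have hid : (u + w • v) + v = u + w^2 • v := by
          funext i
          simp only [Pi.add_apply, Pi.smul_apply, smul_eq_mul]
          linear_combination (-(v i)) * hrel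
        rw [hid, hqo _ (by omega), hqo _ (by omega)]
      · have hid : (u + w • v) + w • v = u := by
          funext i
          simp only [Pi.add_apply, Pi.smul_apply, smul_eq_mul]
          linear_combination (w * v i) * h2
        rw [hid, hqo _ (by omega), hqo _ (by omega)]
    · -- wt (u+w²•v) even : u0 = u + w²•v, v0 = v
      refine punch (u + w^2 • v) v (hmemtv (w^2)) (hnetv (w^2))
        (hdec_t (w^2)) (hqe _ (by omega)) ?_ ?_
      · have hid : (u + w^2 • v) + v = u + w • v := by
          funext i
          simp only [Pi.add_apply, Pi.smul_apply, smul_eq_mul]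
          linear_combination (v i) * hrel + (v i) * h2
        rw [hid, hqo _ (by omega), hqo _ (by omega)]
      · have hid : (u + w^2 • v) + w • v = u + v := by
          funext i
          simp only [Pi.add_apply, Pi.smul_apply, smul_eq_mul]
          linear_combination (v i) * hrel + (w * v i) * h2
        rw [hid, hqo _ (by omega), hqo _ (by omega)]
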